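/- Consider voters distributed on [-1,1] with triangular density f(t) = (1-|t|)/2, each voter at position t approving exactly the candidates within distance d of t, where 0 < d < 1. Fix the first finalist at position 0. For a candidate at position x with 0 ≤ x ≤ d ≤ 1-d, the α-seqAV objective S(x) = ∫_{x-d}^{x+d} f(t)dt − α∫_{x-d}^{d} f(t)dt equals (1/2)(x²(α−2)/2 + xα(1−d)) + C for a constant C independent of x, and hence for α ≤ 2d it is maximized on [0,d] at x* = α(1−d)/(2−α). -/

import Mathlib

open intervalIntegral Filter Topology

/-- α-seqAV objective in the continuous triangular model: approval mass of the
candidate at `x` minus `α` times the mass shared with the first finalist at `0`. -/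
noncomputable def seqScore (d α x : ℝ) : ℝ :=
  (∫ t in (x - d)..(x + d), (1 - |t|) / 2) - α * ∫ t in (x - d)..d, (1 - |t|) / 2

lemma hasDerivAt_mul_abs (t : ℝ) : HasDerivAt (fun s : ℝ => s * |s|) (2 * |t|) t := by
  rcases lt_trichotomy t 0 with ht | ht | ht
  · have h : HasDerivAt (fun s : ℝ => -(s * s)) (2 * |t|) t := by
      have := ((hasDerivAt_id t).mul (hasDerivAt_id t)).neg
      simpa [abs_of_neg ht, two_mul, Pi.mul_def, Pi.neg_def] using this
    refine h.congr_of_eventuallyEq ?_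
    filter_upwards [eventually_lt_nhds ht] with s hs
    simp [abs_of_neg hs]
  · subst ht
    rw [hasDerivAt_iff_tendsto_slope]
    have h : Tendsto (fun s : ℝ => |s|) (𝓝[≠] (0:ℝ)) (𝓝 (2 * |(0:ℝ)|)) := by
      have := (continuous_abs.tendsto (0:ℝ)).mono_left
        (nhdsWithin_le_nhds (s := ({0}ᶜ : Set ℝ)))
      simpa using this
    refine h.congr' ?_
    filter_upwards [self_mem_nhdsWithin] with s hs
    have hs' : s ≠ 0 := hs
    rw [slope_def_field]
    field_simp
    ring
  · have h : HasDerivAt (fun s : ℝ => s * s) (2 * |t|) t := by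
      have := (hasDerivAt_id t).mul (hasDerivAt_id t)
      simpa [abs_of_pos ht, two_mul, Pi.mul_def] using this
    refine h.congr_of_eventuallyEq ?_
    filter_upwards [eventually_gt_nhds ht] with s hs
    simp [abs_of_pos hs]

lemma integ_tri (a b : ℝ) :
    (∫ t in a..b, (1 - |t|) / 2) = (b / 2 - b * |b| / 4) - (a / 2 - a * |a| / 4) := by
  apply intervalIntegral.integral_eq_sub_of_hasDerivAt
  · intro t _
    have h : HasDerivAt (fun s : ℝ => s / 2 - s * |s| / 4) (1 / 2 - 2 * |t| / 4) t :=
      ((hasDerivAt_id t).div_const 2).sub ((hasDerivAt_mul_abs t).div_const 4)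
    exact h.congr_deriv (by ring)
  · exact ((continuous_const.sub continuous_abs).div_const 2).intervalIntegrable a b

lemma seqScore_formula (d α x : ℝ) (hd0 : 0 < d) (hd1 : d ≤ 1 - d)
    (hx0 : 0 ≤ x) (hxd : x ≤ d) :
    seqScore d α x = (1 / 2) * (x ^ 2 * (α - 2) / 2 + x * α * (1 - d)) +
      (d - d ^ 2 / 2 - α * d + α * d ^ 2 / 2) := by
  have h1 : |x + d| = x + d := abs_of_nonneg (by linarith)
  have h2 : |x - d| = -(x - d) := abs_of_nonpos (by linarith)
  have h3 : |d| = d := abs_of_nonneg hd0.le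
  unfold seqScore
  rw [integ_tri, integ_tri, h1, h2, h3]
  ring

theorem seqScore_triangular_inner (d α : ℝ)
    (hd0 : 0 < d) (hd1 : d ≤ 1 - d) (hα0 : 0 ≤ α) (hα1 : α ≤ 1) (hα2d : α ≤ 2 * d) :
    (∃ Cst : ℝ, ∀ x : ℝ, 0 ≤ x → x ≤ d →
        seqScore d α x = (1 / 2) * (x ^ 2 * (α - 2) / 2 + x * α * (1 - d)) + Cst) ∧
    (0 ≤ α * (1 - d) / (2 - α) ∧ α * (1 - d) / (2 - α) ≤ d) ∧
    (∀ x : ℝ, 0 ≤ x → x ≤ d →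
        seqScore d α x ≤ seqScore d α (α * (1 - d) / (2 - α))) := by
  have h2α : (0:ℝ) < 2 - α := by linarith
  have hd12 : d ≤ 1 / 2 := by linarith
  have hxs0 : 0 ≤ α * (1 - d) / (2 - α) := by
    apply div_nonneg _ h2α.le
    have : 0 ≤ 1 - d := by linarith
    positivity
  have hxsd : α * (1 - d) / (2 - α) ≤ d := by
    rw [div_le_iff₀ h2α]
    nlinarith
  refine ⟨⟨d - d ^ 2 / 2 - α * d + α * d ^ 2 / 2,
      fun x hx0 hxd => seqScore_formula d α x hd0 hd1 hx0 hxd⟩,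
    ⟨hxs0, hxsd⟩, fun x hx0 hxd => ?_⟩
  rw [seqScore_formula d α x hd0 hd1 hx0 hxd,
    seqScore_formula d α _ hd0 hd1 hxs0 hxsd]
  have key : (1 / 2) * ((α * (1 - d) / (2 - α)) ^ 2 * (α - 2) / 2 +
      (α * (1 - d) / (2 - α)) * α * (1 - d)) -
      (1 / 2) * (x ^ 2 * (α - 2) / 2 + x * α * (1 - d)) =
      (2 - α) / 4 * (x - α * (1 - d) / (2 - α)) ^ 2 := by
    field_simp
    ring
  nlinarith [sq_nonneg (x - α * (1 - d) / (2 - α)), key]
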